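/- Let σ > 0 and ε ∈ ℝ, and let p = φ_{0,σ} and q = φ_{ε,σ} be the Gaussian densities with variance σ² and means 0 and ε respectively. Given an integer d ≥ 1 and group sizes m₁,…,m_d ∈ ℕ with N = m₁+…+m_d, define probability measures on ℝ^N (coordinates indexed by pairs (j,k), j ∈ {1,…,d}, k ∈ {1,…,m_j}): Q has density ∏_{j=1}^d ∏_{k=1}^{m_j} p(b_j^{(k)}), and P has density (1/d) ∑_{j=1}^d [∏_{k=1}^{m_j} q(b_j^{(k)})] · ∏_{j'≠j} ∏_{k=1}^{m_{j'}} p(b_{j'}^{(k)}). Then TV(P, Q) ≤ (1/(2√d)) · [ (1/d) ∑_{j=1}^d exp(m_j ε²/σ²) − 1 ]^{1/2}, and hence for any hypothesis test distinguishing Q from P the sum of the two error probabilities is at least 1 − (1/(2√d)) · [ (1/d) ∑_{j=1}^d exp(m_j ε²/σ²) − 1 ]^{1/2}. -/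

import Mathlib

open MeasureTheory

/-- Total variation distance between two measures:
`TV(P, Q) = sup over measurable sets s of |P s - Q s|`. -/
noncomputable def tvDist {Ω : Type*} [MeasurableSpace Ω] (P Q : Measure Ω) : ℝ :=
  ⨆ s : {s : Set Ω // MeasurableSet s}, |(P s.1).toReal - (Q s.1).toReal|

section Aux
variable {α : Type*} [MeasurableSpace α] {μ : Measure α}

lemma tvAux_one_sided {f g : α → ℝ} (hf : Integrable f μ) (hg : Integrable g μ)
    (hfg : ∫ x, f x ∂μ = ∫ x, g x ∂μ) (s : Set α) :
    ∫ x in s, (f x - g x) ∂μ ≤ (1/2) * ∫ x, |f x - g x| ∂μ := by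
  have hh : Integrable (fun x => f x - g x) μ := hf.sub hg
  have hha : Integrable (fun x => |f x - g x|) μ := hh.abs
  have hint : ∫ x, (f x - g x) ∂μ = 0 := by
    rw [integral_sub hf hg, hfg, sub_self]
  have hc : Integrable (fun x => (f x - g x + |f x - g x|) / 2) μ := (hh.add hha).div_const 2
  have h1 : ∫ x in s, (f x - g x) ∂μ ≤ ∫ x in s, (f x - g x + |f x - g x|) / 2 ∂μ := by
    refine integral_mono hh.restrict hc.restrict fun x => ?_
    have := le_abs_self (f x - g x); dsimp; linarith
  have h2 : ∫ x in s, (f x - g x + |f x - g x|) / 2 ∂μ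
      ≤ ∫ x, (f x - g x + |f x - g x|) / 2 ∂μ := by
    refine integral_mono_measure Measure.restrict_le_self (ae_of_all _ fun x => ?_) hc
    have := neg_abs_le (f x - g x); dsimp; linarith
  have h3 : ∫ x, (f x - g x + |f x - g x|) / 2 ∂μ = (1/2) * ∫ x, |f x - g x| ∂μ := by
    rw [integral_div, integral_add hh hha, hint]; ring
  linarith

lemma tvAux_absdiff_le {f g : α → ℝ} (hf : Integrable f μ) (hg : Integrable g μ)
    (hfg : ∫ x, f x ∂μ = ∫ x, g x ∂μ) (s : Set α) :
    |∫ x in s, f x ∂μ - ∫ x in s, g x ∂μ| ≤ (1/2) * ∫ x, |f x - g x| ∂μ := by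
  rw [abs_le]
  constructor
  · have := tvAux_one_sided hg hf hfg.symm s
    rw [integral_sub hg.restrict hf.restrict] at this
    simp_rw [abs_sub_comm (g _) (f _)] at this
    linarith
  · have := tvAux_one_sided hf hg hfg s
    rw [integral_sub hf.restrict hg.restrict] at this
    linarith

lemma tvAux_l1_le_sqrt_chi {f g : α → ℝ} (hgpos : ∀ x, 0 < g x)
    (hfm : Measurable f) (hgm : Measurable g)
    (hg : Integrable g μ) (hgint : ∫ x, g x ∂μ = 1)
    (hchi : Integrable (fun x => (f x - g x)^2 / g x) μ) :
    ∫ x, |f x - g x| ∂μ ≤ Real.sqrt (∫ x, (f x - g x)^2 / g x ∂μ) := by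
  set u : α → ℝ := fun x => |f x - g x| / Real.sqrt (g x) with hu
  set w : α → ℝ := fun x => Real.sqrt (g x) with hw
  have hum : Measurable u := ((hfm.sub hgm).abs).div (hgm.sqrt)
  have hwm : Measurable w := hgm.sqrt
  have husq : (fun x => u x ^ 2) = fun x => (f x - g x)^2 / g x := by
    funext x
    simp only [hu, div_pow, sq_abs, Real.sq_sqrt (hgpos x).le]
  have hwsq : (fun x => w x ^ 2) = g := by
    funext x; simp [hw, Real.sq_sqrt (hgpos x).le]
  have hmu : MemLp u 2 μ := by
    rw [memLp_two_iff_integrable_sq hum.aestronglyMeasurable, husq]; exact hchi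
  have hmw : MemLp w 2 μ := by
    rw [memLp_two_iff_integrable_sq hwm.aestronglyMeasurable, hwsq]; exact hg
  have hpq : Real.HolderConjugate 2 2 := Real.HolderConjugate.two_two
  have h2 : ENNReal.ofReal (2:ℝ) = 2 := by norm_num
  have key := integral_mul_norm_le_Lp_mul_Lq (μ := μ) hpq (h2 ▸ hmu) (h2 ▸ hmw)
  have e1 : ∀ x, ‖u x‖ * ‖w x‖ = |f x - g x| := by
    intro x
    rw [Real.norm_eq_abs, Real.norm_eq_abs,
      abs_of_nonneg (div_nonneg (abs_nonneg _) (Real.sqrt_nonneg _)),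
      abs_of_nonneg (Real.sqrt_nonneg _)]
    exact div_mul_cancel₀ _ (Real.sqrt_ne_zero'.mpr (hgpos x))
  have e2 : ∀ x, ‖u x‖ ^ (2:ℝ) = (f x - g x)^2 / g x := by
    intro x
    rw [Real.rpow_two, Real.norm_eq_abs, sq_abs]
    exact congrFun husq x
  have e3 : ∀ x, ‖w x‖ ^ (2:ℝ) = g x := by
    intro x
    rw [Real.rpow_two, Real.norm_eq_abs, sq_abs]
    exact congrFun hwsq x
  simp_rw [e1, e2, e3] at key
  rw [hgint] at key
  calc ∫ x, |f x - g x| ∂μ ≤ (∫ x, (f x - g x)^2 / g x ∂μ) ^ (1/(2:ℝ)) * 1 ^ (1/(2:ℝ)) := key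
    _ = Real.sqrt (∫ x, (f x - g x)^2 / g x ∂μ) := by
        rw [Real.one_rpow, mul_one, Real.sqrt_eq_rpow]

end Aux

open ProbabilityTheory Real in
lemma tvAux_gauss_ratio (σ ε : ℝ) (hσ : 0 < σ) (x : ℝ) :
    (gaussianPDFReal ε ⟨σ^2, sq_nonneg σ⟩ x)^2 / gaussianPDFReal 0 ⟨σ^2, sq_nonneg σ⟩ x
      = Real.exp (ε^2/σ^2) * gaussianPDFReal (2*ε) ⟨σ^2, sq_nonneg σ⟩ x := by
  have hvne : (⟨σ^2, sq_nonneg σ⟩ : NNReal) ≠ 0 := by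
    simp only [ne_eq, ← NNReal.coe_eq_zero, NNReal.coe_mk]
    exact ne_of_gt (pow_pos hσ 2)
  rw [div_eq_iff (gaussianPDFReal_pos 0 _ x hvne).ne']
  simp only [gaussianPDFReal, NNReal.coe_mk]
  show ((Real.sqrt (2 * π * σ^2))⁻¹ * Real.exp (-(x - ε) ^ 2 / (2 * σ ^ 2)))^2 = Real.exp (ε^2/σ^2) * ((Real.sqrt (2 * π * σ^2))⁻¹ * Real.exp (-(x - 2*ε) ^ 2 / (2 * σ ^ 2))) * ((Real.sqrt (2 * π * σ^2))⁻¹ * Real.exp (-(x - 0) ^ 2 / (2 * σ ^ 2)))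
  have hs : (0:ℝ) < Real.sqrt (2 * π * σ^2) :=
    Real.sqrt_pos.mpr (by have := pow_pos hσ 2; positivity)
  rw [mul_pow, ← Real.exp_nat_mul]
  have lhs2 : ((Real.sqrt (2 * π * σ^2))⁻¹)^2 * Real.exp ((2:ℕ) * (-(x - ε) ^ 2 / (2 * σ ^ 2)))
      = ((Real.sqrt (2 * π * σ^2))⁻¹)^2 *
        Real.exp (ε^2/σ^2 + (-(x - 2*ε) ^ 2 / (2 * σ ^ 2)) + (-(x - 0) ^ 2 / (2 * σ ^ 2))) := by
    congr 1
    rw [Real.exp_eq_exp]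
    field_simp
    ring
  rw [lhs2, Real.exp_add, Real.exp_add]
  ring


/-- Gaussian version of the minimax lower bound: with `p = φ_{0,σ}` and `q = φ_{ε,σ}`
Gaussian densities, let `Q` be the product measure on `ℝ^N` (coordinates indexed by
`(j,k)`, `j < d`, `k < m j`) with all coordinates of density `p`, and `P` the measure with
density `(1/d) ∑_j ∏_{k} q(b_j^{(k)}) ∏_{j'≠j} ∏_k p(b_{j'}^{(k)})`. Then
`TV(P, Q) ≤ (1/(2√d)) · ((1/d) ∑_j exp(m_j ε²/σ²) - 1)^{1/2}`, and any hypothesis test has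
total error probability at least `1` minus that bound. -/
theorem tv_bound_mixture_gaussian (σ ε : ℝ) (hσ : 0 < σ)
    (p q : ℝ → ℝ)
    (hp : ∀ x, p x =
      (1 / Real.sqrt (2 * Real.pi * σ ^ 2)) * Real.exp (-(x - 0) ^ 2 / (2 * σ ^ 2)))
    (hq : ∀ x, q x =
      (1 / Real.sqrt (2 * Real.pi * σ ^ 2)) * Real.exp (-(x - ε) ^ 2 / (2 * σ ^ 2)))
    (d : ℕ) (hd : 1 ≤ d) (m : Fin d → ℕ)
    (P Q : Measure (((j : Fin d) × Fin (m j)) → ℝ))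
    (hQ : Q = volume.withDensity fun b => ENNReal.ofReal (∏ i, p (b i)))
    (hP : P = volume.withDensity fun b => ENNReal.ofReal
      ((1 / d : ℝ) * ∑ j : Fin d,
        (∏ k : Fin (m j), q (b ⟨j, k⟩)) *
          ∏ j' ∈ Finset.univ.erase j, ∏ k : Fin (m j'), p (b ⟨j', k⟩))) :
    tvDist P Q ≤
        (1 / (2 * Real.sqrt d)) *
          Real.sqrt ((1 / d : ℝ) * ∑ j, Real.exp (m j * ε ^ 2 / σ ^ 2) - 1) ∧
      ∀ Ψ : (((j : Fin d) × Fin (m j)) → ℝ) → Bool, Measurable Ψ →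
        (P {b | Ψ b = true}).toReal + (Q {b | Ψ b = false}).toReal ≥
          1 - (1 / (2 * Real.sqrt d)) *
            Real.sqrt ((1 / d : ℝ) * ∑ j, Real.exp (m j * ε ^ 2 / σ ^ 2) - 1) := by
  classical
  have hd0 : (0:ℝ) < d := by exact_mod_cast Nat.lt_of_lt_of_le Nat.zero_lt_one hd
  set v : NNReal := ⟨σ^2, sq_nonneg σ⟩ with hvdef
  have hvne : v ≠ 0 := by
    simp only [hvdef, ne_eq, ← NNReal.coe_eq_zero, NNReal.coe_mk]
    exact ne_of_gt (pow_pos hσ 2)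
  have hp' : p = ProbabilityTheory.gaussianPDFReal 0 v := by
    funext x; rw [hp]; simp [ProbabilityTheory.gaussianPDFReal, one_div, hvdef]; rfl
  have hq' : q = ProbabilityTheory.gaussianPDFReal ε v := by
    funext x; rw [hq]; simp [ProbabilityTheory.gaussianPDFReal, one_div, hvdef]; rfl
  have hpint : Integrable p := hp' ▸ ProbabilityTheory.integrable_gaussianPDFReal 0 v
  have hqint : Integrable q := hq' ▸ ProbabilityTheory.integrable_gaussianPDFReal ε v
  have hpone : ∫ x, p x = 1 := by
    rw [hp']; exact ProbabilityTheory.integral_gaussianPDFReal_eq_one 0 hvne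
  have hqone : ∫ x, q x = 1 := by
    rw [hq']; exact ProbabilityTheory.integral_gaussianPDFReal_eq_one ε hvne
  have hppos : ∀ x, 0 < p x := by
    rw [hp']; exact fun x => ProbabilityTheory.gaussianPDFReal_pos 0 v x hvne
  have hqpos : ∀ x, 0 < q x := by
    rw [hq']; exact fun x => ProbabilityTheory.gaussianPDFReal_pos ε v x hvne
  have hpm : Measurable p := hp' ▸ ProbabilityTheory.measurable_gaussianPDFReal 0 v
  have hqm : Measurable q := hq' ▸ ProbabilityTheory.measurable_gaussianPDFReal ε v
  set E := Real.exp (ε^2/σ^2) with hE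
  have hrq : ∀ x, q x ^ 2 / p x = E * ProbabilityTheory.gaussianPDFReal (2*ε) v x := by
    intro x; rw [hp', hq', hvdef]; exact tvAux_gauss_ratio σ ε hσ x
  have hrint : Integrable (fun x => q x ^ 2 / p x) := by
    simp_rw [hrq]
    exact (ProbabilityTheory.integrable_gaussianPDFReal _ _).const_mul E
  have hrone : ∫ x, q x ^ 2 / p x = E := by
    simp_rw [hrq]
    rw [integral_const_mul, ProbabilityTheory.integral_gaussianPDFReal_eq_one _ hvne, mul_one]
  -- index type and main functions
  set r : Fin d → ((j : Fin d) × Fin (m j)) → ℝ → ℝ :=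
    fun j i => if i.1 = j then q else p with hrdef
  set g : (((j : Fin d) × Fin (m j)) → ℝ) → ℝ := fun b => ∏ i, p (b i) with hgdef
  set F : Fin d → (((j : Fin d) × Fin (m j)) → ℝ) → ℝ :=
    fun j b => ∏ i, r j i (b i) with hFdef
  set f : (((j : Fin d) × Fin (m j)) → ℝ) → ℝ :=
    fun b => (1/d : ℝ) * ∑ j, F j b with hfdef
  -- density of P equals f
  have hdens : ∀ b, ((1 / d : ℝ) * ∑ j : Fin d,
      (∏ k : Fin (m j), q (b ⟨j, k⟩)) *
        ∏ j' ∈ Finset.univ.erase j, ∏ k : Fin (m j'), p (b ⟨j', k⟩)) = f b := by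
    intro b
    rw [hfdef]
    congr 1
    refine Finset.sum_congr rfl fun j _ => ?_
    have hFj : F j b = ∏ j₁ : Fin d, ∏ k : Fin (m j₁), r j ⟨j₁, k⟩ (b ⟨j₁, k⟩) := by
      rw [hFdef]; dsimp only
      rw [← Finset.univ_sigma_univ, Finset.prod_sigma]
    rw [hFj, ← Finset.mul_prod_erase Finset.univ _ (Finset.mem_univ j)]
    congr 1
    · refine Finset.prod_congr rfl fun k _ => ?_
      simp [hrdef]
    · refine Finset.prod_congr rfl fun j' hj' => ?_
      refine Finset.prod_congr rfl fun k _ => ?_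
      have hne : j' ≠ j := Finset.ne_of_mem_erase hj'
      simp [hrdef, hne]
  have hPf : P = volume.withDensity fun b => ENNReal.ofReal (f b) := by
    rw [hP]
    congr 1
    funext b
    rw [hdens b]
  -- coordinate facts
  have hrm : ∀ j i, Measurable (r j i) := by
    intro j i; rw [hrdef]; dsimp only; split
    · exact hqm
    · exact hpm
  have hrint' : ∀ j i, Integrable (r j i) := by
    intro j i; rw [hrdef]; dsimp only; split
    · exact hqint
    · exact hpint
  have hrone' : ∀ j i, ∫ x, r j i x = 1 := by
    intro j i; rw [hrdef]; dsimp only; split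
    · exact hqone
    · exact hpone
  have hrpos : ∀ j i x, 0 < r j i x := by
    intro j i x; rw [hrdef]; dsimp only; split
    · exact hqpos x
    · exact hppos x
  -- facts about g
  have hgm : Measurable g :=
    Finset.measurable_prod _ fun i _ => hpm.comp (measurable_pi_apply i)
  have hgint : Integrable g := Integrable.fintype_prod fun _ => hpint
  have hgone : ∫ b, g b = 1 := by
    rw [hgdef, integral_fintype_prod_volume_eq_prod (fun _ => p)]
    simp [hpone]
  have hgpos : ∀ b, 0 < g b := fun b => Finset.prod_pos fun i _ => hppos _
  -- facts about F
  have hFm : ∀ j, Measurable (F j) := fun j =>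
    Finset.measurable_prod _ fun i _ => (hrm j i).comp (measurable_pi_apply i)
  have hFint : ∀ j, Integrable (F j) := fun j => Integrable.fintype_prod fun i => hrint' j i
  have hFone : ∀ j, ∫ b, F j b = 1 := by
    intro j
    rw [hFdef, integral_fintype_prod_volume_eq_prod (fun i => r j i)]
    simp [hrone']
  have hFnonneg : ∀ j b, 0 ≤ F j b := fun j b =>
    Finset.prod_nonneg fun i _ => (hrpos j i (b i)).le
  -- facts about f
  have hfm : Measurable f :=
    (Finset.measurable_sum _ fun j _ => hFm j).const_mul _
  have hfint : Integrable f :=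
    (integrable_finset_sum _ fun j _ => hFint j).const_mul _
  have hfone : ∫ b, f b = 1 := by
    rw [hfdef]
    rw [integral_const_mul, integral_finset_sum _ fun j _ => hFint j]
    simp only [hFone, Finset.sum_const, Finset.card_univ, Fintype.card_fin, nsmul_eq_mul,
      mul_one]
    field_simp
  have hfnonneg : ∀ b, 0 ≤ f b := fun b =>
    mul_nonneg (by positivity) (Finset.sum_nonneg fun j _ => hFnonneg j b)
  -- cross terms
  set c : Fin d → Fin d → ((j : Fin d) × Fin (m j)) → ℝ → ℝ :=
    fun j j' i x => r j i x * r j' i x / p x with hcdef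
  have hprod : ∀ j j' b, F j b * F j' b / g b = ∏ i, c j j' i (b i) := by
    intro j j' b
    rw [hFdef, hgdef, hcdef]; dsimp only
    rw [← Finset.prod_mul_distrib, ← Finset.prod_div_distrib]
  have hre : ∀ (j : Fin d) i, i.1 = j → r j i = q := by
    intro j i h; rw [hrdef]; dsimp only; rw [if_pos h]
  have hrne : ∀ (j : Fin d) i, ¬(i.1 = j) → r j i = p := by
    intro j i h; rw [hrdef]; dsimp only; rw [if_neg h]
  have hkey : ∀ j j' i, Integrable (c j j' i) ∧
      ∫ x, c j j' i x = (if i.1 = j ∧ i.1 = j' then E else 1) := by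
    intro j j' i
    by_cases h1 : i.1 = j <;> by_cases h2 : i.1 = j'
    · have hc : c j j' i = fun x => q x ^ 2 / p x := by
        funext x; rw [hcdef]; dsimp only
        rw [hre j i h1, hre j' i h2, sq]
      rw [hc, if_pos ⟨h1, h2⟩]
      exact ⟨hrint, hrone⟩
    · have hc : c j j' i = q := by
        funext x; rw [hcdef]; dsimp only
        rw [hre j i h1, hrne j' i h2, mul_div_assoc, div_self (hppos x).ne', mul_one]
      rw [hc, if_neg (fun h => h2 h.2)]
      exact ⟨hqint, hqone⟩
    · have hc : c j j' i = q := by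
        funext x; rw [hcdef]; dsimp only
        rw [hre j' i h2, hrne j i h1, mul_comm, mul_div_assoc, div_self (hppos x).ne', mul_one]
      rw [hc, if_neg (fun h => h1 h.1)]
      exact ⟨hqint, hqone⟩
    · have hc : c j j' i = p := by
        funext x; rw [hcdef]; dsimp only
        rw [hrne j i h1, hrne j' i h2, mul_div_assoc, div_self (hppos x).ne', mul_one]
      rw [hc, if_neg (fun h => h1 h.1)]
      exact ⟨hpint, hpone⟩
  have hFF : ∀ j j', Integrable (fun b => F j b * F j' b / g b) ∧
      ∫ b, F j b * F j' b / g b = (if j = j' then E ^ (m j) else 1) := by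
    intro j j'
    have he : (fun b => F j b * F j' b / g b) = fun b => ∏ i, c j j' i (b i) :=
      funext (hprod j j')
    constructor
    · rw [he]; exact Integrable.fintype_prod fun i => (hkey j j' i).1
    · rw [he, integral_fintype_prod_volume_eq_prod (fun i => c j j' i)]
      rw [Finset.prod_congr rfl fun i _ => (hkey j j' i).2]
      by_cases hjj : j = j'
      · subst hjj
        simp only [and_self]
        rw [← Finset.univ_sigma_univ, Finset.prod_sigma]
        have hstep : ∀ j₁ : Fin d, (∏ k : Fin (m j₁),
            if (⟨j₁, k⟩ : (j : Fin d) × Fin (m j)).1 = j then E else 1)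
            = (if j₁ = j then E ^ (m j₁) else 1) := by
          intro j₁
          by_cases h : j₁ = j <;>
            simp [h, Finset.prod_const, Finset.card_univ]
        rw [Finset.prod_congr rfl fun j₁ _ => hstep j₁, Finset.prod_ite_eq' Finset.univ j
          (fun j₁ => E ^ (m j₁))]
        simp
      · have hno : ∀ i : (j : Fin d) × Fin (m j), ¬(i.1 = j ∧ i.1 = j') := by
          rintro i ⟨ha, hb⟩; exact hjj (ha ▸ hb ▸ rfl)
        simp [hno, hjj]
  -- double sum value
  have hEpow : ∀ j, E ^ (m j) = Real.exp ((m j : ℝ) * ε ^ 2 / σ ^ 2) := by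
    intro j; rw [hE, ← Real.exp_nat_mul]; congr 1; ring
  set S : ℝ := ∑ j, Real.exp ((m j : ℝ) * ε ^ 2 / σ ^ 2) with hSdef
  have hinner : ∀ j : Fin d, (∑ j' : Fin d, if j = j' then E ^ (m j) else 1)
      = E ^ (m j) + ((d:ℝ) - 1) := by
    intro j
    have hsplit : ∀ j' : Fin d, (if j = j' then E ^ (m j) else 1)
        = (if j' = j then (E ^ (m j) - 1) else 0) + 1 := by
      intro j'
      by_cases h : j = j'
      · rw [if_pos h, if_pos h.symm]; ring
      · rw [if_neg h, if_neg (fun hh => h hh.symm), zero_add]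
    rw [Finset.sum_congr rfl fun j' _ => hsplit j', Finset.sum_add_distrib,
      Finset.sum_ite_eq' Finset.univ j (fun _ => E ^ (m j) - 1)]
    simp only [Finset.mem_univ, if_true, Finset.sum_const, Finset.card_univ, Fintype.card_fin,
      nsmul_eq_mul, mul_one]
    ring
  have hdouble : ∑ j : Fin d, ∑ j' : Fin d, (if j = j' then E ^ (m j) else 1)
      = S + ((d:ℝ) * d - d) := by
    rw [Finset.sum_congr rfl fun j _ => hinner j, Finset.sum_add_distrib]
    simp only [Finset.sum_const, Finset.card_univ, Fintype.card_fin, nsmul_eq_mul]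
    rw [hSdef, Finset.sum_congr rfl fun j _ => hEpow j]
    ring
  -- the double sum integrand
  have hXint : Integrable (fun b => ∑ j : Fin d, ∑ j' : Fin d, F j b * F j' b / g b) :=
    integrable_finset_sum _ fun j _ => integrable_finset_sum _ fun j' _ => (hFF j j').1
  have hXval : ∫ b, ∑ j : Fin d, ∑ j' : Fin d, F j b * F j' b / g b = S + ((d:ℝ) * d - d) := by
    rw [integral_finset_sum _ fun j _ => integrable_finset_sum _ fun j' _ => (hFF j j').1]
    rw [Finset.sum_congr rfl fun j _ =>
      integral_finset_sum Finset.univ fun j' _ => (hFF j j').1]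
    rw [Finset.sum_congr rfl fun j _ => Finset.sum_congr rfl fun j' _ => (hFF j j').2]
    exact hdouble
  -- chi-square pointwise identity
  have hchieq : (fun b => (f b - g b)^2 / g b)
      = fun b => (1/(d:ℝ))^2 * (∑ j : Fin d, ∑ j' : Fin d, F j b * F j' b / g b)
          - 2 * f b + g b := by
    funext b
    have hgne := (hgpos b).ne'
    have h1 : f b ^ 2 = (1/(d:ℝ))^2 * ∑ j : Fin d, ∑ j' : Fin d, F j b * F j' b := by
      rw [hfdef]; dsimp only
      rw [mul_pow, pow_two (∑ j : Fin d, F j b), Finset.sum_mul_sum]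
    have h2 : ∑ j : Fin d, ∑ j' : Fin d, F j b * F j' b / g b
        = (∑ j : Fin d, ∑ j' : Fin d, F j b * F j' b) / g b := by
      rw [Finset.sum_div]
      exact Finset.sum_congr rfl fun j _ => (Finset.sum_div _ _ _).symm
    rw [h2]
    rw [mul_div_assoc', ← h1]
    field_simp
    ring
  have hchiint : Integrable (fun b => (f b - g b)^2 / g b) := by
    rw [hchieq]
    have hi1 : Integrable (fun b => (1/(d:ℝ))^2 *
        (∑ j : Fin d, ∑ j' : Fin d, F j b * F j' b / g b) - 2 * f b) := by
      exact (hXint.const_mul _).sub (hfint.const_mul 2)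
    exact hi1.add hgint
  have hchival : ∫ b, (f b - g b)^2 / g b = (1/(d:ℝ)) * ((1/(d:ℝ)) * S - 1) := by
    have hi1 : Integrable (fun b => (1/(d:ℝ))^2 *
        (∑ j : Fin d, ∑ j' : Fin d, F j b * F j' b / g b) - 2 * f b) := by
      exact (hXint.const_mul _).sub (hfint.const_mul 2)
    have hi2 : Integrable (fun b => (1/(d:ℝ))^2 *
        (∑ j : Fin d, ∑ j' : Fin d, F j b * F j' b / g b)) := by
      exact hXint.const_mul _
    have hi3 : Integrable (fun b => 2 * f b) := by exact hfint.const_mul 2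
    rw [hchieq, integral_add hi1 hgint, integral_sub hi2 hi3, integral_const_mul,
      integral_const_mul, hXval, hfone, hgone]
    have : (d:ℝ) ≠ 0 := ne_of_gt hd0
    field_simp
    ring
  -- toReal of measures as integrals
  have htoP : ∀ s : Set (((j : Fin d) × Fin (m j)) → ℝ), MeasurableSet s →
      (P s).toReal = ∫ b in s, f b := by
    intro s hs
    rw [hPf, withDensity_apply _ hs]
    exact (integral_eq_lintegral_of_nonneg_ae (ae_of_all _ fun b => hfnonneg b)
      hfm.aestronglyMeasurable.restrict).symm
  have htoQ : ∀ s : Set (((j : Fin d) × Fin (m j)) → ℝ), MeasurableSet s →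
      (Q s).toReal = ∫ b in s, g b := by
    intro s hs
    rw [hQ, withDensity_apply _ hs]
    have : (fun b : ((j : Fin d) × Fin (m j)) → ℝ => ∏ i, p (b i)) = g := by rw [hgdef]
    rw [this]
    exact (integral_eq_lintegral_of_nonneg_ae (ae_of_all _ fun b => (hgpos b).le)
      hgm.aestronglyMeasurable.restrict).symm
  -- the bound
  set B : ℝ := (1 / (2 * Real.sqrt d)) * Real.sqrt ((1 / d : ℝ) * S - 1) with hBdef
  have hsqd : (0:ℝ) < Real.sqrt d := Real.sqrt_pos.mpr hd0
  have hBnonneg : 0 ≤ B := by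
    rw [hBdef]
    have := Real.sqrt_nonneg ((1 / d : ℝ) * S - 1)
    positivity
  have hhalf : (1/2 : ℝ) * Real.sqrt ((1/(d:ℝ)) * ((1/(d:ℝ)) * S - 1)) = B := by
    have hsq : Real.sqrt (1/(d:ℝ)) = 1/Real.sqrt d := by
      rw [one_div, one_div, Real.sqrt_inv]
    rw [hBdef, Real.sqrt_mul (by positivity : (0:ℝ) ≤ 1/(d:ℝ)), hsq]
    rw [one_div (2 * Real.sqrt (d:ℝ)), mul_inv]
    ring
  have hmaster : ∀ s : Set (((j : Fin d) × Fin (m j)) → ℝ), MeasurableSet s →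
      |(P s).toReal - (Q s).toReal| ≤ B := by
    intro s hs
    rw [htoP s hs, htoQ s hs]
    calc |(∫ b in s, f b) - ∫ b in s, g b| ≤ (1/2) * ∫ b, |f b - g b| :=
          tvAux_absdiff_le hfint hgint (hfone.trans hgone.symm) s
      _ ≤ (1/2) * Real.sqrt (∫ b, (f b - g b)^2 / g b) := by
          have := tvAux_l1_le_sqrt_chi hgpos hfm hgm hgint hgone hchiint
          linarith
      _ = B := by rw [hchival, hhalf]
  constructor
  · refine Real.iSup_le (fun s => hmaster s.1 s.2) hBnonneg
  · intro Ψ hΨ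
    set s : Set (((j : Fin d) × Fin (m j)) → ℝ) := {b | Ψ b = true} with hsdef
    have hs : MeasurableSet s := hΨ (measurableSet_singleton true)
    have hsc : {b : ((j : Fin d) × Fin (m j)) → ℝ | Ψ b = false} = sᶜ := by
      ext b
      simp only [hsdef, Set.mem_setOf_eq, Set.mem_compl_iff]
      cases hb : Ψ b <;> simp [hb]
    rw [hsc, htoP s hs, htoQ sᶜ hs.compl]
    have hsplit : (∫ b in s, g b) + ∫ b in sᶜ, g b = 1 :=
      (integral_add_compl hs hgint).trans hgone
    have habs := hmaster s hs
    rw [htoP s hs, htoQ s hs] at habs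
    have h1 := (abs_le.mp habs).1
    linarith
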